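/- Let k ∈ ℂ be nonzero with arg(k) ∈ [5π/8, 7π/8], and let w ∈ ℂ with w ≠ 1 satisfy Re(k(1 + w)/(1 − w)) ≤ 0. Then |w| ≤ c₀, where c₀ = tan(3π/8) + sec(3π/8). -/

import Mathlib

set_option maxHeartbeats 1000000


/-- Let k ∈ ℂ be nonzero with arg(k) ∈ [5π/8, 7π/8], and let w ∈ ℂ with
w ≠ 1 satisfy Re(k(1 + w)/(1 − w)) ≤ 0. Then |w| ≤ c₀, where
c₀ = tan(3π/8) + sec(3π/8). -/
theorem stmt_8 (k : ℂ) (hk : k ≠ 0)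
    (harg : Complex.arg k ∈ Set.Icc (5 * Real.pi / 8) (7 * Real.pi / 8))
    (w : ℂ) (hw : w ≠ 1) (h : (k * (1 + w) / (1 - w)).re ≤ 0) :
    ‖w‖ ≤ Real.tan (3 * Real.pi / 8) + 1 / Real.cos (3 * Real.pi / 8) := by
  obtain ⟨hθ1, hθ2⟩ := harg
  set θ := Complex.arg k with hθ
  have hpi := Real.pi_pos
  set α := 3 * Real.pi / 8 with hα
  -- cos α > 0
  have hcosα : 0 < Real.cos α := by
    apply Real.cos_pos_of_mem_Ioo
    constructor <;> [linarith; linarith]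
  -- sin(θ + α) ≤ 0
  have hsin_sum : Real.sin (θ + α) ≤ 0 := by
    have h1 : Real.sin (θ + α - Real.pi) = -Real.sin (θ + α) := Real.sin_sub_pi _
    have h2 : 0 ≤ Real.sin (θ + α - Real.pi) :=
      Real.sin_nonneg_of_nonneg_of_le_pi (by linarith) (by linarith)
    linarith
  have hsadd : Real.sin θ * Real.cos α + Real.cos θ * Real.sin α ≤ 0 := by
    rw [← Real.sin_add]; exact hsin_sum
  -- cos θ < 0, sin θ ≥ 0
  have hcosθ : Real.cos θ < 0 :=
    Real.cos_neg_of_pi_div_two_lt_of_lt (by linarith) (by linarith)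
  have hsinθ : 0 ≤ Real.sin θ :=
    Real.sin_nonneg_of_nonneg_of_le_pi (by linarith) (by linarith)
  -- translate to re/im of k
  have habsk : 0 < ‖k‖ := by
    simpa [norm_pos_iff] using hk
  have hkre : k.re = ‖k‖ * Real.cos θ := by
    rw [Complex.cos_arg hk]; field_simp
  have hkim : k.im = ‖k‖ * Real.sin θ := by
    rw [Complex.sin_arg]; field_simp
  have ha : 0 < -k.re := by
    rw [hkre]; nlinarith
  have hb : 0 ≤ k.im := by
    rw [hkim]; positivity
  set T := Real.tan α with hT
  set S := 1 / Real.cos α with hS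
  have hSpos : 0 < S := by positivity
  have hS2 : S ^ 2 = 1 + T ^ 2 := by
    have h1 := Real.inv_one_add_tan_sq (x := α) (ne_of_gt hcosα)
    rw [hS, hT]
    rw [div_pow, one_pow, eq_comm, ← h1, one_div, inv_inv]
  have hTa : k.im ≤ T * (-k.re) := by
    have hsθ : Real.sin θ ≤ T * (-Real.cos θ) := by
      rw [hT, Real.tan_eq_sin_div_cos, div_mul_eq_mul_div, le_div_iff₀ hcosα]
      nlinarith
    rw [hkre, hkim]
    calc ‖k‖ * Real.sin θ ≤ ‖k‖ * (T * (-Real.cos θ)) := by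
          exact mul_le_mul_of_nonneg_left hsθ (le_of_lt habsk)
      _ = T * -(‖k‖ * Real.cos θ) := by ring
  -- key inequality from h
  have hd : (1 : ℂ) - w ≠ 0 := sub_ne_zero.mpr (Ne.symm hw)
  have e : k * (1 + w) * (starRingEnd ℂ (1 - w))
      = (k * (1 + w) / (1 - w)) * ((Complex.normSq (1 - w) : ℝ) : ℂ) := by
    rw [div_mul_eq_mul_div, eq_div_iff hd, mul_assoc, mul_comm (starRingEnd ℂ (1 - w)), Complex.mul_conj]
  have hre : (k * (1 + w) * (starRingEnd ℂ (1 - w))).re ≤ 0 := by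
    rw [e, mul_comm, Complex.re_ofReal_mul]
    exact mul_nonpos_of_nonneg_of_nonpos (Complex.normSq_nonneg _) h
  set r := ‖w‖ with hr
  have hr0 : 0 ≤ r := norm_nonneg w
  have hr2 : r ^ 2 = w.re ^ 2 + w.im ^ 2 := by
    rw [hr, Complex.sq_norm, Complex.normSq_apply]; ring
  have key : (-k.re) * (r ^ 2 - 1) ≤ 2 * k.im * w.im := by
    simp only [Complex.mul_re, Complex.mul_im, Complex.add_re, Complex.add_im,
      Complex.sub_re, Complex.sub_im, Complex.one_re, Complex.one_im,
      Complex.conj_re, Complex.conj_im] at hre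
    nlinarith [hre]
  have him : w.im ≤ r := by
    rw [hr]; exact Complex.im_le_norm w
  -- combine
  have key2 : (-k.re) * (r ^ 2 - 1) ≤ 2 * (T * (-k.re)) * r := by
    calc (-k.re) * (r ^ 2 - 1) ≤ 2 * k.im * w.im := key
      _ ≤ 2 * k.im * r := by nlinarith
      _ ≤ 2 * (T * (-k.re)) * r := by nlinarith
  have hq : r ^ 2 - 2 * T * r - 1 ≤ 0 := by
    have := (mul_le_mul_iff_of_pos_left ha).mp (by linarith [key2] : (-k.re) * (r ^ 2 - 1) ≤ (-k.re) * (2 * T * r))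
    linarith
  nlinarith [hq, hS2, hSpos, sq_nonneg (r - T + S)]
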